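/- Let P be a hereditary graph class, let G be a finite graph on n vertices, and let Z be a nonempty set of vertices of G such that every forbidden set of G contains Z as a subset. Then at most |Z| maximal P sets of G do not contain Z as a subset, and at most |Z|·n maximal connected P sets of G do not contain Z as a subset. -/

import Mathlib

attribute [local instance] Classical.propDecidable

/-- A *graph class*: a collection of finite simple graphs, given as a property of
simple graphs over every finite vertex type. -/
abbrev GraphClass : Type 1 :=
  ∀ (V : Type) [Fintype V], SimpleGraph V → Prop

/-- The graph class is a nonempty collection of graphs. -/
def GraphClass.NonemptyClass (P : GraphClass) : Prop :=
  ∃ (V : Type) (_ : Fintype V) (G : SimpleGraph V), P V G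

/-- The graph class is closed under isomorphism. -/
def GraphClass.IsoClosed (P : GraphClass) : Prop :=
  ∀ (V W : Type) (_ : Fintype V) (_ : Fintype W) (G : SimpleGraph V) (H : SimpleGraph W),
    _root_.Nonempty (G ≃g H) → (P V G ↔ P W H)

/-- The graph class is hereditary: it is closed under taking induced subgraphs. -/
def GraphClass.Hereditary (P : GraphClass) : Prop :=
  ∀ (V : Type) (_ : Fintype V) (G : SimpleGraph V) (S : Set V),
    P V G → P (↥S) (G.induce S)

variable {V : Type} [Fintype V]

/-- `S ⊆ V(G)` is a `P` set of `G` if the induced subgraph `G[S]` belongs to `P`. -/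
def IsPSet (P : GraphClass) (G : SimpleGraph V) (S : Set V) : Prop :=
  P (↥S) (G.induce S)

/-- `S` is a maximal `P` set of `G`: a `P` set with no proper superset that is a `P` set. -/
def IsMaxPSet (P : GraphClass) (G : SimpleGraph V) (S : Set V) : Prop :=
  IsPSet P G S ∧ ∀ T : Set V, S ⊂ T → ¬ IsPSet P G T

/-- `S` is a connected `P` set of `G`: a `P` set inducing a connected subgraph. -/
def IsConnPSet (P : GraphClass) (G : SimpleGraph V) (S : Set V) : Prop :=
  IsPSet P G S ∧ (G.induce S).Connected

/-- `S` is a maximal connected `P` set of `G`: a connected `P` set contained in no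
strictly larger connected `P` set. -/
def IsMaxConnPSet (P : GraphClass) (G : SimpleGraph V) (S : Set V) : Prop :=
  IsConnPSet P G S ∧ ∀ T : Set V, S ⊂ T → ¬ IsConnPSet P G T

/-- A forbidden set of `G` (with respect to the class `P`): an inclusion-minimal vertex
set inducing a subgraph that is not in `P`. -/
def IsForbiddenSet (P : GraphClass) (G : SimpleGraph V) (X : Set V) : Prop :=
  ¬ IsPSet P G X ∧ ∀ Y : Set V, Y ⊂ X → IsPSet P G Y

/-- Let `P` be a hereditary graph class, `G` a finite graph on `n`
vertices, and `Z` a nonempty set of vertices such that every forbidden set of `G`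
contains `Z`.  Then at most `|Z|` maximal `P` sets of `G` do not contain `Z`, and at
most `|Z| * n` maximal connected `P` sets of `G` do not contain `Z`. -/
theorem card_maxPSets_not_containing_Z
    (P : GraphClass) (hne : P.NonemptyClass) (hiso : P.IsoClosed) (hher : P.Hereditary)
    {V : Type} [Fintype V] (G : SimpleGraph V) (Z : Set V) (hZne : Z.Nonempty)
    (hZ : ∀ X : Set V, IsForbiddenSet P G X → Z ⊆ X) :
    {S : Set V | IsMaxPSet P G S ∧ ¬ Z ⊆ S}.ncard ≤ Z.ncard ∧
    {S : Set V | IsMaxConnPSet P G S ∧ ¬ Z ⊆ S}.ncard ≤ Z.ncard * Fintype.card V := by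
  classical
  -- Key lemma: every set not containing Z is a P set.
  have key : ∀ T : Set V, ¬ Z ⊆ T → IsPSet P G T := by
    have main : ∀ n : ℕ, ∀ T : Set V, T.ncard = n → ¬ Z ⊆ T → IsPSet P G T := by
      intro n
      induction n using Nat.strong_induction_on with
      | _ n ih =>
        intro T hTn hZT
        by_contra hP
        by_cases hforb : ∀ Y : Set V, Y ⊂ T → IsPSet P G Y
        · exact hZT (hZ T ⟨hP, hforb⟩)
        · push_neg at hforb
          obtain ⟨Y, hYT, hYnP⟩ := hforb
          have hlt : Y.ncard < n := hTn ▸ Set.ncard_lt_ncard hYT (Set.toFinite T)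
          exact hYnP (ih _ hlt Y rfl (fun h => hZT (h.trans hYT.subset)))
    exact fun T => main T.ncard T rfl
  -- A maximal P set not containing Z equals {z}ᶜ for some z ∈ Z \ S.
  have maxP_eq : ∀ S : Set V, IsMaxPSet P G S → ∀ z ∈ Z, z ∉ S → S = ({z}ᶜ : Set V) := by
    intro S hS z hzZ hzS
    have hsub : S ⊆ ({z}ᶜ : Set V) := fun v hv hvz => hzS (by
      simp only [Set.mem_singleton_iff] at hvz; exact hvz ▸ hv)
    have hPc : IsPSet P G ({z}ᶜ : Set V) := key _ (fun h => (h hzZ) rfl)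
    by_contra hne
    exact hS.2 _ (ssubset_of_subset_of_ne hsub hne) hPc
  constructor
  · -- Part 1
    have hsub : {S : Set V | IsMaxPSet P G S ∧ ¬ Z ⊆ S} ⊆
        (fun z : V => ({z}ᶜ : Set V)) '' Z := by
      intro S ⟨hS, hZS⟩
      obtain ⟨z, hzZ, hzS⟩ := Set.not_subset.mp hZS
      exact ⟨z, hzZ, (maxP_eq S hS z hzZ hzS).symm⟩
    calc {S : Set V | IsMaxPSet P G S ∧ ¬ Z ⊆ S}.ncard
        ≤ ((fun z : V => ({z}ᶜ : Set V)) '' Z).ncard :=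
          Set.ncard_le_ncard hsub (Set.toFinite _)
      _ ≤ Z.ncard := Set.ncard_image_le (Set.toFinite _)
  · -- Part 2
    set B := {S : Set V | IsMaxConnPSet P G S ∧ ¬ Z ⊆ S} with hB
    have hex : ∀ S : Set V, ∃ p : V × V, S ∈ B → p.1 ∈ Z ∧ p.1 ∉ S ∧ p.2 ∈ S := by
      intro S
      by_cases h : S ∈ B
      · obtain ⟨⟨⟨_, hconn⟩, _⟩, hZS⟩ := h
        obtain ⟨z, hzZ, hzS⟩ := Set.not_subset.mp hZS
        obtain ⟨s, hs⟩ : S.Nonempty := by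
          obtain ⟨⟨s, hs⟩⟩ := hconn.nonempty
          exact ⟨s, hs⟩
        exact ⟨(z, s), fun _ => ⟨hzZ, hzS, hs⟩⟩
      · exact ⟨(hZne.some, hZne.some), fun h' => absurd h' h⟩
    choose f hf using hex
    have hmaps : ∀ S ∈ B, f S ∈ Z ×ˢ (Set.univ : Set V) := by
      intro S hS
      exact ⟨(hf S hS).1, Set.mem_univ _⟩
    have hinj : Set.InjOn f B := by
      intro S₁ hS₁ S₂ hS₂ hfeq
      obtain ⟨hz₁, hz₁S, hs₁⟩ := hf S₁ hS₁
      obtain ⟨hz₂, hz₂S, hs₂⟩ := hf S₂ hS₂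
      rw [hfeq] at hz₁ hz₁S hs₁
      set z := (f S₂).1
      set s := (f S₂).2
      -- S₁ ∪ S₂ is a connected P set
      have hUP : IsPSet P G (S₁ ∪ S₂) := by
        refine key _ (fun h => ?_)
        rcases h hz₁ with h' | h'
        · exact hz₁S h'
        · exact hz₂S h'
      have hUconn : (G.induce (S₁ ∪ S₂)).Connected :=
        SimpleGraph.induce_union_connected hS₁.1.1.2.preconnected hS₂.1.1.2.preconnected ⟨s, hs₁, hs₂⟩
      have h1 : S₁ = S₁ ∪ S₂ := by
        by_contra hne
        exact hS₁.1.2 _ (ssubset_of_subset_of_ne Set.subset_union_left hne) ⟨hUP, hUconn⟩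
      have h2 : S₂ = S₁ ∪ S₂ := by
        by_contra hne
        exact hS₂.1.2 _ (ssubset_of_subset_of_ne Set.subset_union_right hne) ⟨hUP, hUconn⟩
      exact h1.trans h2.symm
    have hcard : (Z ×ˢ (Set.univ : Set V)).ncard = Z.ncard * Fintype.card V := by
      rw [← Nat.card_coe_set_eq, Nat.card_congr (Equiv.Set.prod Z Set.univ),
        Nat.card_prod, Nat.card_coe_set_eq, Nat.card_congr (Equiv.Set.univ V),
        Nat.card_eq_fintype_card]
    calc B.ncard ≤ (Z ×ˢ (Set.univ : Set V)).ncard :=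
          Set.ncard_le_ncard_of_injOn f hmaps hinj (Set.toFinite _)
      _ = Z.ncard * Fintype.card V := hcard
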